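/- For every fixed τ > 0, the function f_τ(λ) = cos(τλ)/(2λ(1 − sin(τλ))) is strictly convex on the open interval (0, π/(2τ)). -/

import Mathlib

open Real

noncomputable def gAux (τ x : ℝ) : ℝ := (1 + Real.sin (τ*x)) / (Real.cos (τ*x) * (2*x))
noncomputable def g1Aux (τ x : ℝ) : ℝ :=
  (1 + Real.sin (τ*x)) * (τ*x - Real.cos (τ*x)) / (2 * Real.cos (τ*x)^2 * x^2)
noncomputable def g2Aux (τ x : ℝ) : ℝ :=
  (1 + Real.sin (τ*x)) * ((τ*x)^2 * Real.sin (τ*x) + (τ*x - Real.cos (τ*x))^2 + Real.cos (τ*x)^2)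
    / (2 * Real.cos (τ*x)^3 * x^3)

lemma hasDerivAt_gAux (τ x : ℝ) (hx : x ≠ 0) (hc : Real.cos (τ*x) ≠ 0) :
    HasDerivAt (gAux τ) (g1Aux τ x) x := by
  have hlin : HasDerivAt (fun y : ℝ => τ*y) τ x := by
    simpa using (hasDerivAt_id x).const_mul τ
  have hs : HasDerivAt (fun y : ℝ => Real.sin (τ*y)) (Real.cos (τ*x) * τ) x :=
    (Real.hasDerivAt_sin (τ*x)).comp x hlin
  have hco : HasDerivAt (fun y : ℝ => Real.cos (τ*y)) (-Real.sin (τ*x) * τ) x :=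
    (Real.hasDerivAt_cos (τ*x)).comp x hlin
  have hN : HasDerivAt (fun y : ℝ => 1 + Real.sin (τ*y)) (Real.cos (τ*x) * τ) x :=
    hs.const_add 1
  have hD : HasDerivAt (fun y : ℝ => Real.cos (τ*y) * (2*y))
      ((-Real.sin (τ*x) * τ) * (2*x) + Real.cos (τ*x) * 2) x := by
    have h2 : HasDerivAt (fun y : ℝ => 2*y) 2 x := by
      simpa using (hasDerivAt_id x).const_mul (2:ℝ)
    exact hco.mul h2
  have hD0 : Real.cos (τ*x) * (2*x) ≠ 0 := by
    exact mul_ne_zero hc (by simpa using hx)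
  have := hN.div hD hD0
  refine this.congr_deriv ?_
  symm
  unfold g1Aux
  have pyth := Real.sin_sq_add_cos_sq (τ*x)
  rw [div_eq_div_iff (by positivity) (by positivity)]
  linear_combination (-4*τ*x^3*Real.cos (τ*x)^2) * pyth

lemma hasDerivAt_g1Aux (τ x : ℝ) (hx : x ≠ 0) (hc : Real.cos (τ*x) ≠ 0) :
    HasDerivAt (g1Aux τ) (g2Aux τ x) x := by
  have hlin : HasDerivAt (fun y : ℝ => τ*y) τ x := by
    simpa using (hasDerivAt_id x).const_mul τ
  have hs : HasDerivAt (fun y : ℝ => Real.sin (τ*y)) (Real.cos (τ*x) * τ) x :=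
    (Real.hasDerivAt_sin (τ*x)).comp x hlin
  have hco : HasDerivAt (fun y : ℝ => Real.cos (τ*y)) (-Real.sin (τ*x) * τ) x :=
    (Real.hasDerivAt_cos (τ*x)).comp x hlin
  have hN : HasDerivAt (fun y : ℝ => (1 + Real.sin (τ*y)) * (τ*y - Real.cos (τ*y)))
      ((Real.cos (τ*x) * τ) * (τ*x - Real.cos (τ*x))
        + (1 + Real.sin (τ*x)) * (τ - (-Real.sin (τ*x) * τ))) x :=
    (hs.const_add 1).mul (hlin.sub hco)
  have hD : HasDerivAt (fun y : ℝ => 2 * Real.cos (τ*y)^2 * y^2)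
      ((2 * (2 * Real.cos (τ*x) * (-Real.sin (τ*x) * τ))) * x^2
        + 2 * Real.cos (τ*x)^2 * (2*x)) x := by
    have hc2 : HasDerivAt (fun y : ℝ => 2 * Real.cos (τ*y)^2)
        (2 * (2 * Real.cos (τ*x) * (-Real.sin (τ*x) * τ))) x := by
      have := (hco.pow 2)
      simpa [mul_comm, mul_assoc, mul_left_comm] using this.const_mul (2:ℝ)
    have hx2 : HasDerivAt (fun y : ℝ => y^2) (2*x) x := by
      simpa using hasDerivAt_pow 2 x
    exact hc2.mul hx2
  have hD0 : 2 * Real.cos (τ*x)^2 * x^2 ≠ 0 := by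
    apply mul_ne_zero (mul_ne_zero two_ne_zero (pow_ne_zero _ hc)) (pow_ne_zero _ hx)
  have := hN.div hD hD0
  refine this.congr_deriv ?_
  symm
  unfold g2Aux
  have pyth := Real.sin_sq_add_cos_sq (τ*x)
  rw [div_eq_div_iff (by positivity) (by positivity)]
  linear_combination (4*Real.cos (τ*x)^4*x^4*(Real.cos (τ*x)*(τ*x) - (τ*x)^2)) * pyth

theorem fTau_strictConvexOn (τ : ℝ) (hτ : 0 < τ) :
    StrictConvexOn ℝ (Set.Ioo 0 (Real.pi / (2 * τ)))
      (fun lam : ℝ => Real.cos (τ * lam) / (2 * lam * (1 - Real.sin (τ * lam)))) := by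
  set S := Set.Ioo 0 (Real.pi / (2 * τ)) with hSdef
  have hSopen : IsOpen S := isOpen_Ioo
  -- basic facts on S
  have hfacts : ∀ x ∈ S, 0 < x ∧ 0 < Real.cos (τ*x) ∧ 0 < Real.sin (τ*x) ∧ Real.sin (τ*x) < 1 := by
    intro x hx
    obtain ⟨hx0, hxu⟩ := hx
    have ht0 : 0 < τ * x := mul_pos hτ hx0
    have htu : τ * x < Real.pi / 2 := by
      rw [lt_div_iff₀ (by positivity : (0:ℝ) < 2*τ)] at hxu
      nlinarith
    have hcos : 0 < Real.cos (τ*x) := Real.cos_pos_of_mem_Ioo ⟨by linarith [Real.pi_pos], htu⟩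
    have hsin : 0 < Real.sin (τ*x) := Real.sin_pos_of_pos_of_lt_pi ht0 (by linarith [Real.pi_pos])
    have hs1 : Real.sin (τ*x) < 1 := by
      nlinarith [Real.sin_sq_add_cos_sq (τ*x)]
    exact ⟨hx0, hcos, hsin, hs1⟩
  -- f = gAux on S
  have hfg : ∀ x ∈ S, Real.cos (τ * x) / (2 * x * (1 - Real.sin (τ * x))) = gAux τ x := by
    intro x hx
    obtain ⟨hx0, hc, hs, hs1⟩ := hfacts x hx
    unfold gAux
    have pyth := Real.sin_sq_add_cos_sq (τ*x)
    rw [div_eq_div_iff (by nlinarith : (0:ℝ) < 2 * x * (1 - Real.sin (τ * x))).ne'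
      (by positivity : (0:ℝ) < Real.cos (τ*x) * (2*x)).ne']
    nlinarith [pyth]
  have hconv : Convex ℝ S := convex_Ioo _ _
  apply strictConvexOn_of_deriv2_pos hconv
  · -- continuity
    apply ContinuousOn.div
    · fun_prop
    · fun_prop
    · intro x hx
      obtain ⟨hx0, _, _, hs1⟩ := hfacts x hx
      have : (0:ℝ) < 2 * x * (1 - Real.sin (τ * x)) := by nlinarith
      exact this.ne'
  · intro x hx
    rw [hSopen.interior_eq] at hx
    obtain ⟨hx0, hc, hs, hs1⟩ := hfacts x hx
    -- f =ᶠ gAux near x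
    have hev : (fun lam : ℝ => Real.cos (τ * lam) / (2 * lam * (1 - Real.sin (τ * lam))))
        =ᶠ[nhds x] gAux τ := by
      filter_upwards [hSopen.mem_nhds hx] with y hy using hfg y hy
    have hev1 : deriv (gAux τ) =ᶠ[nhds x] g1Aux τ := by
      filter_upwards [hSopen.mem_nhds hx] with y hy
      obtain ⟨hy0, hyc, _, _⟩ := hfacts y hy
      exact (hasDerivAt_gAux τ y hy0.ne' hyc.ne').deriv
    have key : deriv^[2] (fun lam : ℝ =>
        Real.cos (τ * lam) / (2 * lam * (1 - Real.sin (τ * lam)))) x = g2Aux τ x := by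
      show deriv (deriv _) x = _
      rw [Filter.EventuallyEq.deriv_eq (hev.deriv)]
      rw [Filter.EventuallyEq.deriv_eq hev1]
      exact (hasDerivAt_g1Aux τ x hx0.ne' hc.ne').deriv
    rw [key]
    unfold g2Aux
    have h1 : 0 < (τ*x)^2 * Real.sin (τ*x) + (τ*x - Real.cos (τ*x))^2 + Real.cos (τ*x)^2 := by
      have : 0 < (τ*x)^2 * Real.sin (τ*x) := by positivity
      nlinarith [sq_nonneg (τ*x - Real.cos (τ*x))]
    positivity
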